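/- Let G be a simple graph on a finite vertex set and let {u,v} be an edge of G. Then for every subset Y of the vertices, det((G[uv])[Y]) = det(G[Y ⊕ {u,v}]) over GF(2), where ⊕ is symmetric difference. -/

import Mathlib

set_option linter.unusedSectionVars false

variable {V : Type*} [Fintype V] [DecidableEq V]

/-- Local complementation at a vertex `w`: complement the edges within `N_G(w)`. -/
def SimpleGraph.localComp (G : SimpleGraph V) (w : V) : SimpleGraph V where
  Adj x y := x ≠ y ∧ Xor' (G.Adj x y) (G.Adj x w ∧ G.Adj y w)
  symm := by
    constructor
    intro x y ⟨hne, hx⟩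
    refine ⟨hne.symm, ?_⟩
    have h1 := G.adj_comm x y
    unfold Xor' at hx ⊢
    unfold Xor at hx ⊢
    tauto
  loopless := by constructor; intro x ⟨h, _⟩; exact h rfl

/-- `x ∼_G y` : `x = y` or `{x,y}` is an edge of `G`. -/
def SimpleGraph.nbr (G : SimpleGraph V) (x y : V) : Prop := x = y ∨ G.Adj x y

theorem SimpleGraph.nbr_comm (G : SimpleGraph V) (x y : V) : G.nbr x y ↔ G.nbr y x :=
  or_congr eq_comm (G.adj_comm x y)

private theorem xor_swap_right (a b c : Prop) : Xor' (Xor' a b) c ↔ Xor' (Xor' a c) b := by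
  unfold Xor'; unfold Xor; tauto

/-- The pivot `G[uv]` of `G` on an edge `{u,v}`, characterized by
`x ∼_{G[uv]} y ⟺ (x ∼_G y) XOR ((x ∼_G u) ∧ (y ∼_G v)) XOR ((x ∼_G v) ∧ (y ∼_G u))`. -/
def SimpleGraph.pivot (G : SimpleGraph V) (u v : V) : SimpleGraph V where
  Adj x y := x ≠ y ∧
    Xor' (Xor' (G.nbr x y) (G.nbr x u ∧ G.nbr y v)) (G.nbr x v ∧ G.nbr y u)
  symm := by
    constructor
    intro x y ⟨hne, hx⟩
    refine ⟨hne.symm, ?_⟩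
    show Xor' (Xor' (G.nbr y x) (G.nbr y u ∧ G.nbr x v)) (G.nbr y v ∧ G.nbr x u)
    rw [G.nbr_comm y x, and_comm (a := G.nbr y u) (b := G.nbr x v),
      and_comm (a := G.nbr y v) (b := G.nbr x u)]
    exact (xor_swap_right _ _ _).mp hx
  loopless := by constructor; intro x ⟨h, _⟩; exact h rfl

/-- Determinant over GF(2) of the adjacency matrix of the subgraph of `G` induced by `S`. -/
noncomputable def gdet (G : SimpleGraph V) (S : Finset V) : ZMod 2 := by
  classical
  exact Matrix.det (Matrix.of fun i j : S => if G.Adj i j then (1 : ZMod 2) else 0)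

/-- Apply a sequence of pivots (left to right). -/
def applyPivots (G : SimpleGraph V) : List (V × V) → SimpleGraph V
  | [] => G
  | p :: φ => applyPivots (G.pivot p.1 p.2) φ

/-- A sequence of pivots is applicable when each pair is an edge of the graph
obtained by applying all preceding pivots. -/
def PivotsApplicable (G : SimpleGraph V) : List (V × V) → Prop
  | [] => True
  | p :: φ => G.Adj p.1 p.2 ∧ PivotsApplicable (G.pivot p.1 p.2) φ

/-- The support of a sequence of pivots: vertices occurring an odd number of times. -/
def pivotSupport (φ : List (V × V)) : Finset V :=
  Finset.univ.filter fun x => Odd ((φ.flatMap fun p => [p.1, p.2]).count x)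

/-- A sequence of pivots is reduced if its pivot vertices are pairwise distinct. -/
def ReducedSeq (φ : List (V × V)) : Prop := (φ.flatMap fun p => [p.1, p.2]).Nodup

/-- The number of perfect matchings of the subgraph of `G` induced by `S`:
sets of edges of `G` inside `S` such that every vertex of `S` lies in exactly one of them. -/
noncomputable def pmCount (G : SimpleGraph V) (S : Finset V) : ℕ := by
  classical
  exact (Finset.univ.filter fun P : Finset (Sym2 V) =>
    (∀ e ∈ P, e ∈ G.edgeSet ∧ ∀ v ∈ e, v ∈ S) ∧
    ∀ v ∈ S, ∃! e, e ∈ P ∧ v ∈ e).card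


section GdetPivotAux
open Matrix

private lemma pivot_adj_iff' (G : SimpleGraph V) (u v x y : V) :
    (G.pivot u v).Adj x y ↔ x ≠ y ∧
      Xor' (Xor' (G.nbr x y) (G.nbr x u ∧ G.nbr y v)) (G.nbr x v ∧ G.nbr y u) := Iff.rfl

private lemma xor_aa' (a c : Prop) : Xor' (Xor' a a) c ↔ c := by unfold Xor'; unfold Xor; tauto
private lemma xor_aca' (a c : Prop) : Xor' (Xor' a c) a ↔ c := by unfold Xor'; unfold Xor; tauto

open Classical in
private lemma key_core' (G : SimpleGraph V) (u v : V) (huv : G.Adj u v) (x y : V) :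
    (if (G.pivot u v).Adj x u then (1:ZMod 2) else 0) * (if G.Adj u y then 1 else 0)
      + (if (G.pivot u v).Adj x v then (1:ZMod 2) else 0) * (if G.Adj v y then 1 else 0)
      + (if y ∈ ({u,v}:Finset V) then 0 else (if (G.pivot u v).Adj x y then (1:ZMod 2) else 0))
    = if x ∈ ({u,v}:Finset V) then (if x = y then (1:ZMod 2) else 0)
      else if G.Adj x y then 1 else 0 := by
  classical
  have hne : u ≠ v := huv.ne
  have hpu : ∀ z, (G.pivot u v).Adj z u ↔ z ≠ u ∧ G.nbr z v := by
    intro z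
    rw [pivot_adj_iff']
    have h1 : G.nbr u v ↔ True := iff_true_intro (Or.inr huv)
    have h2 : G.nbr u u ↔ True := iff_true_intro (Or.inl rfl)
    rw [h1, h2, and_true, and_true, xor_aa']
  have hpv : ∀ z, (G.pivot u v).Adj z v ↔ z ≠ v ∧ G.nbr z u := by
    intro z
    rw [pivot_adj_iff']
    have h1 : G.nbr v v ↔ True := iff_true_intro (Or.inl rfl)
    have h2 : G.nbr v u ↔ True := iff_true_intro (Or.inr huv.symm)
    rw [h1, h2, and_true, and_true, xor_aca']
  by_cases hxu : x = u
  · simp only [hxu]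
    have t1 : ¬ (G.pivot u v).Adj u u := (G.pivot u v).irrefl
    have t2 : (G.pivot u v).Adj u v := (hpv u).mpr ⟨hne, Or.inl rfl⟩
    rw [if_neg t1, if_pos t2, zero_mul, one_mul, zero_add]
    by_cases hyu : y = u
    · simp only [hyu]
      simp [huv.symm, hne]
    · by_cases hyv : y = v
      · simp only [hyv]
        simp [G.irrefl, hne]
      · have hyS : y ∉ ({u,v}:Finset V) := by simp [hyu, hyv]
        have e3 : (G.pivot u v).Adj u y ↔ G.Adj y v := by
          rw [pivot_adj_iff']
          have h1 : G.nbr u u ↔ True := iff_true_intro (Or.inl rfl)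
          have h2 : G.nbr u v ↔ True := iff_true_intro (Or.inr huv)
          have h3 : G.nbr u y ↔ G.Adj u y := by
            simp [SimpleGraph.nbr, (show ¬ u = y from fun h => hyu h.symm)]
          have h4 : G.nbr y u ↔ G.Adj u y := by
            simp [SimpleGraph.nbr, hyu, G.adj_comm y u]
          have h5 : G.nbr y v ↔ G.Adj y v := by
            simp [SimpleGraph.nbr, hyv]
          rw [h1, h2, h3, h4, h5, true_and, true_and, xor_aca',
            and_iff_right (show u ≠ y from fun h => hyu h.symm)]
        rw [if_neg hyS, e3]
        have hc : G.Adj v y ↔ G.Adj y v := G.adj_comm v y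
        rw [hc]
        have : u ∈ ({u,v}:Finset V) := by simp
        rw [if_pos this, if_neg (show ¬ u = y from fun h => hyu h.symm)]
        by_cases h : G.Adj y v <;> simp [h] <;> decide
  · by_cases hxv : x = v
    · simp only [hxv]
      have t1 : (G.pivot u v).Adj v u := (hpu v).mpr ⟨Ne.symm hne, Or.inl rfl⟩
      have t2 : ¬ (G.pivot u v).Adj v v := (G.pivot u v).irrefl
      rw [if_pos t1, if_neg t2, zero_mul, one_mul, add_zero]
      by_cases hyu : y = u
      · simp only [hyu]
        simp [G.irrefl, Ne.symm hne]
      · by_cases hyv : y = v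
        · simp only [hyv]
          simp [huv, Ne.symm hne]
        · have hyS : y ∉ ({u,v}:Finset V) := by simp [hyu, hyv]
          have e3 : (G.pivot u v).Adj v y ↔ G.Adj y u := by
            rw [pivot_adj_iff']
            have h1 : G.nbr v v ↔ True := iff_true_intro (Or.inl rfl)
            have h2 : G.nbr v u ↔ True := iff_true_intro (Or.inr huv.symm)
            have h3 : G.nbr v y ↔ G.Adj y v := by
              simp [SimpleGraph.nbr, (show ¬ v = y from fun h => hyv h.symm), G.adj_comm v y]
            have h4 : G.nbr y v ↔ G.Adj y v := by
              simp [SimpleGraph.nbr, hyv]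
            have h5 : G.nbr y u ↔ G.Adj y u := by
              simp [SimpleGraph.nbr, hyu]
            rw [h1, h2, h3, h4, h5, true_and, true_and, xor_aa',
              and_iff_right (show v ≠ y from fun h => hyv h.symm)]
          rw [if_neg hyS, e3]
          have hc : G.Adj u y ↔ G.Adj y u := G.adj_comm u y
          rw [hc]
          have : v ∈ ({u,v}:Finset V) := by simp
          rw [if_pos this, if_neg (show ¬ v = y from fun h => hyv h.symm)]
          by_cases h : G.Adj y u <;> simp [h] <;> decide
    · have hxS : x ∉ ({u,v}:Finset V) := by simp [hxu, hxv]
      have e1 : (G.pivot u v).Adj x u ↔ G.Adj x v := by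
        rw [hpu, and_iff_right hxu]
        simp [SimpleGraph.nbr, hxv]
      have e2 : (G.pivot u v).Adj x v ↔ G.Adj x u := by
        rw [hpv, and_iff_right hxv]
        simp [SimpleGraph.nbr, hxu]
      rw [e1, e2, if_neg hxS]
      by_cases hyu : y = u
      · simp only [hyu]
        simp [G.irrefl, huv.symm, hyu ▸ hxu]
      · by_cases hyv : y = v
        · simp only [hyv]
          simp [G.irrefl, huv, hyv ▸ hxv]
        · have hyS : y ∉ ({u,v}:Finset V) := by simp [hyu, hyv]
          rw [if_neg hyS]
          by_cases hxy : x = y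
          · simp only [hxy]
            have t0 : ¬ (G.pivot u v).Adj y y := (G.pivot u v).irrefl
            rw [if_neg t0, if_neg (G.irrefl), G.adj_comm u y, G.adj_comm v y]
            by_cases h1 : G.Adj y u <;> by_cases h2 : G.Adj y v <;> simp [h1, h2] <;> decide
          · have e3 : (G.pivot u v).Adj x y ↔
                Xor' (Xor' (G.Adj x y) (G.Adj x u ∧ G.Adj y v)) (G.Adj x v ∧ G.Adj y u) := by
              rw [pivot_adj_iff']
              have h1 : G.nbr x y ↔ G.Adj x y := by simp [SimpleGraph.nbr, hxy]
              have h2 : G.nbr x u ↔ G.Adj x u := by simp [SimpleGraph.nbr, hxu]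
              have h3 : G.nbr x v ↔ G.Adj x v := by simp [SimpleGraph.nbr, hxv]
              have h4 : G.nbr y u ↔ G.Adj y u := by simp [SimpleGraph.nbr, hyu]
              have h5 : G.nbr y v ↔ G.Adj y v := by simp [SimpleGraph.nbr, hyv]
              rw [h1, h2, h3, h4, h5, and_iff_right hxy]
            rw [e3, G.adj_comm u y, G.adj_comm v y]
            by_cases a1 : G.Adj x y <;> by_cases a2 : G.Adj x u <;> by_cases a3 : G.Adj x v <;>
              by_cases a4 : G.Adj y u <;> by_cases a5 : G.Adj y v <;>
              simp [a1, a2, a3, a4, a5, Xor'] <;> decide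

open Classical in
private lemma det_extend' (M : Matrix V V (ZMod 2)) (Y : Finset V) :
    (Matrix.of fun x y => if x ∈ Y then M x y else if x = y then (1:ZMod 2) else 0).det
      = (M.submatrix (Subtype.val : {x // x ∈ Y} → V) Subtype.val).det := by
  rw [← Matrix.det_submatrix_equiv_self (Equiv.sumCompl (· ∈ Y))]
  have h : (Matrix.of fun x y => if x ∈ Y then M x y else if x = y then (1:ZMod 2) else 0).submatrix
      (Equiv.sumCompl (· ∈ Y)) (Equiv.sumCompl (· ∈ Y))
      = Matrix.fromBlocks (M.submatrix Subtype.val Subtype.val)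
          (M.submatrix Subtype.val Subtype.val) 0 1 := by
    ext i j
    cases i with
    | inl i =>
      cases j with
      | inl j => simp [i.2]
      | inr j => simp [i.2]
    | inr i =>
      cases j with
      | inl j =>
        have : i.1 ≠ j.1 := fun h => i.2 (h ▸ j.2)
        simp [i.2, this]
      | inr j => simp [i.2, Subtype.ext_iff, Matrix.one_apply]
  rw [h, Matrix.det_fromBlocks_zero₂₁, Matrix.det_one, mul_one]

open Classical in
private lemma gdet_eq' (H : SimpleGraph V) (W : Finset V) :
    gdet H W = ((Matrix.of fun x y : V => if H.Adj x y then (1:ZMod 2) else 0).submatrix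
      (Subtype.val : {x // x ∈ W} → V) Subtype.val).det := by
  unfold gdet
  congr 1

end GdetPivotAux

/-- For an edge `{u,v}` of `G` and every vertex subset `Y`,
`det((G[uv])[Y]) = det(G[Y ⊕ {u,v}])` over GF(2). -/
theorem gdet_pivot (G : SimpleGraph V) (u v : V) (huv : G.Adj u v) (Y : Finset V) :
    gdet (G.pivot u v) Y = gdet G (symmDiff Y {u, v}) := by
  classical
  have hne : u ≠ v := huv.ne
  set S : Finset V := {u, v} with hS
  set A : Matrix V V (ZMod 2) := Matrix.of fun x y => if G.Adj x y then 1 else 0 with hA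
  set A' : Matrix V V (ZMod 2) :=
    Matrix.of fun x y => if (G.pivot u v).Adj x y then 1 else 0 with hA'
  set R : Matrix V V (ZMod 2) :=
    Matrix.of fun x y => if x ∈ Y then A' x y else if x = y then 1 else 0 with hR
  set T : Matrix V V (ZMod 2) :=
    Matrix.of fun x y => if x ∈ S then A x y else if x = y then 1 else 0 with hT
  set Z : Matrix V V (ZMod 2) :=
    Matrix.of fun x y => if x ∈ symmDiff Y S then A x y else if x = y then 1 else 0 with hZ
  have key : ∀ x y : V, (∑ k, A' x k * T k y)
      = if x ∈ S then (if x = y then (1:ZMod 2) else 0) else A x y := by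
    intro x y
    have hsum : (∑ k, A' x k * T k y)
        = A' x u * A u y + A' x v * A v y
          + (if y ∈ S then 0 else A' x y) := by
      rw [← Finset.sum_filter_add_sum_filter_not Finset.univ (· ∈ S)]
      have hfil : Finset.univ.filter (· ∈ S) = S := by ext k; simp
      congr 1
      · rw [hfil, hS, Finset.sum_pair hne]
        have : ∀ k, k ∈ S → T k y = A k y := by
          intro k hk; simp [hT, hk]
        rw [this u (by simp [hS]), this v (by simp [hS])]
      · have : ∀ k ∈ Finset.univ.filter (· ∉ S), A' x k * T k y
            = if k = y then A' x k else 0 := by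
          intro k hk
          have hk' : k ∉ S := by simpa using hk
          simp only [hT, Matrix.of_apply, if_neg hk']
          by_cases h : k = y <;> simp [h]
        rw [Finset.sum_congr rfl this, Finset.sum_ite_eq' (Finset.univ.filter (· ∉ S)) y]
        by_cases h : y ∈ S <;> simp [h]
    rw [hsum]
    exact key_core' G u v huv x y
  have hRT : R * T = Z := by
    ext x y
    rw [Matrix.mul_apply]
    by_cases hx : x ∈ Y
    · have : ∀ k, R x k = A' x k := by intro k; simp [hR, hx]
      simp only [this]
      rw [key x y]
      have hxmem : x ∈ symmDiff Y S ↔ ¬ x ∈ S := by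
        simp [Finset.mem_symmDiff, hx]
      by_cases hxs : x ∈ S <;> simp [hZ, hxmem, hxs, hA]
    · have : ∀ k, R x k = if x = k then 1 else 0 := by intro k; simp [hR, hx]
      simp only [this, ite_mul, one_mul, zero_mul]
      rw [Finset.sum_ite_eq Finset.univ x (fun k => T k y)]
      have hxmem : x ∈ symmDiff Y S ↔ x ∈ S := by
        simp [Finset.mem_symmDiff, hx]
      by_cases hxs : x ∈ S <;> simp [hZ, hT, hxmem, hxs]
  have hdetT : T.det = 1 := by
    rw [hT, det_extend']
    have hu : u ∈ S := by simp [hS]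
    have hv : v ∈ S := by simp [hS]
    let e : Fin 2 → {z // z ∈ S} := ![⟨u,hu⟩,⟨v,hv⟩]
    have hbij : Function.Bijective e := by
      constructor
      · intro a b hab
        fin_cases a <;> fin_cases b <;> simp_all [e, Subtype.ext_iff]
      · rintro ⟨z, hz⟩
        rw [hS] at hz
        simp only [Finset.mem_insert, Finset.mem_singleton] at hz
        rcases hz with rfl | rfl
        · exact ⟨0, rfl⟩
        · exact ⟨1, rfl⟩
    rw [← Matrix.det_submatrix_equiv_self (Equiv.ofBijective e hbij)]
    rw [Matrix.det_fin_two]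
    simp [e, Equiv.ofBijective, hA, huv, G.adj_comm v u, G.irrefl]
  have h1 : gdet (G.pivot u v) Y = R.det := by
    rw [gdet_eq', hR, det_extend']
  have h2 : gdet G (symmDiff Y S) = Z.det := by
    rw [gdet_eq', hZ, det_extend']
  rw [h1, h2, ← hRT, Matrix.det_mul, hdetT, mul_one]
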